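/- arXiv:1701.00668 — 3 statements merged into one kernel-verified Lean document; each statement's English description precedes it below -/
import Mathlib

section
/- The function f(x) = (6(1+x)^2/(3+2x)) · ((1+x)ln(1+x) - x)/x^2 - 1 is strictly monotonically increasing on (0,∞). -/
open Real Set

private lemma log1p_lt (x : ℝ) (hx : 0 < x) : Real.log (1 + x) < x := by
  have h := Real.log_lt_sub_one_of_pos (x := 1 + x) (by linarith) (by linarith)
  linarith

private lemma hlog (y : ℝ) (hy : (0:ℝ) < 1 + y) :
    HasDerivAt (fun y : ℝ => Real.log (1 + y)) (1 / (1 + y)) y := by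
  have h := (Real.hasDerivAt_log (ne_of_gt hy)).comp y
    ((hasDerivAt_id y).const_add 1)
  simpa [Function.comp_def] using h

private lemma g_pos (x : ℝ) (hx : 0 < x) :
    3 * (x^2 + 3*x + 2) * Real.log (1 + x) < 2*x^3 + 6*x^2 + 6*x := by
  set G : ℝ → ℝ := fun y => 2*y^3 + 6*y^2 + 6*y - 3*(y^2 + 3*y + 2) * Real.log (1 + y)
    with hG
  have hGd : ∀ y ∈ interior (Ici (0:ℝ)), 0 < deriv G y := by
    intro y hy
    rw [interior_Ici] at hy
    have hy' : (0:ℝ) < y := hy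
    have h1y : (0:ℝ) < 1 + y := by linarith
    have hp : HasDerivAt (fun y : ℝ => 2*y^3 + 6*y^2 + 6*y) (6*y^2 + 12*y + 6) y := by
      have h := (((hasDerivAt_pow 3 y).const_mul 2).add
        ((hasDerivAt_pow 2 y).const_mul 6)).add ((hasDerivAt_id' y).const_mul 6)
      refine h.congr_deriv ?_; push_cast; ring
    have hq : HasDerivAt (fun y : ℝ => 3*(y^2 + 3*y + 2)) (3*(2*y + 3)) y := by
      have h := (((hasDerivAt_pow 2 y).add ((hasDerivAt_id' y).const_mul 3)).add_const 2).const_mul 3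
      refine h.congr_deriv ?_; push_cast; ring
    have hD : HasDerivAt G
        (6*y^2 + 12*y + 6 - (3*(2*y+3) * Real.log (1+y) + 3*(y^2+3*y+2) * (1/(1+y)))) y :=
      hp.sub (hq.mul (hlog y h1y))
    rw [hD.deriv]
    have hfrac : 3*(y^2+3*y+2) * (1/(1+y)) = 3*(y+2) := by
      field_simp; ring
    rw [hfrac]
    have hL := log1p_lt y hy'
    nlinarith [hL]
  have hGc : ContinuousOn G (Ici (0:ℝ)) := by
    apply ContinuousOn.sub
    · fun_prop
    · apply ContinuousOn.mul (by fun_prop)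
      apply ContinuousOn.log (by fun_prop)
      intro y hy
      have h0 : (0:ℝ) ≤ y := hy
      positivity
  have hmono := strictMonoOn_of_deriv_pos (convex_Ici 0) hGc hGd
  have h := hmono (self_mem_Ici) (le_of_lt hx) hx
  have h0 : G 0 = 0 := by simp [hG]
  rw [h0] at h
  simp only [hG] at h
  linarith

theorem stmt_1 (f : ℝ → ℝ)
    (hf : ∀ x : ℝ, 0 < x →
      f x = 6 * (1 + x)^2 / (3 + 2*x) * (((1 + x) * Real.log (1 + x) - x) / x^2) - 1) :
    StrictMonoOn f (Set.Ioi 0) := by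
  set F : ℝ → ℝ := fun x =>
    6*(1+x)^2 * ((1+x) * Real.log (1+x) - x) / ((3+2*x) * x^2) - 1 with hF
  have key : ∀ x : ℝ, 0 < x → HasDerivAt F
      (((12*(1+x) * ((1+x)*Real.log (1+x) - x) + 6*(1+x)^2 * Real.log (1+x)) * ((3+2*x)*x^2)
        - 6*(1+x)^2 * ((1+x)*Real.log (1+x) - x) * (6*x + 6*x^2)) / ((3+2*x)*x^2)^2) x := by
    intro x hx
    have h1x : (0:ℝ) < 1 + x := by linarith
    have hA : HasDerivAt (fun x : ℝ => (1+x) * Real.log (1+x) - x) (Real.log (1+x)) x := by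
      have h := (((hasDerivAt_id' x).const_add 1).mul (hlog x h1x)).sub (hasDerivAt_id' x)
      refine h.congr_deriv ?_
      field_simp
      ring
    have hB : HasDerivAt (fun x : ℝ => 6*(1+x)^2) (12*(1+x)) x := by
      have h := (((hasDerivAt_id' x).const_add 1).pow 2).const_mul 6
      refine h.congr_deriv ?_; push_cast; ring
    have hv : HasDerivAt (fun x : ℝ => (3+2*x) * x^2) (6*x + 6*x^2) x := by
      have h := (((hasDerivAt_id' x).const_mul 2).const_add 3).mul (hasDerivAt_pow 2 x)
      refine h.congr_deriv ?_; push_cast; ring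
    have hvne : (3+2*x) * x^2 ≠ 0 := by positivity
    have h := ((hB.mul hA).div hv hvne).sub_const 1
    exact h
  have hmono : StrictMonoOn F (Ioi (0:ℝ)) := by
    apply strictMonoOn_of_deriv_pos (convex_Ioi 0)
    · intro x hx
      exact (key x hx).differentiableAt.continuousAt.continuousWithinAt
    · intro x hx
      rw [interior_Ioi] at hx
      have hx' : (0:ℝ) < x := hx
      rw [(key x hx).deriv]
      apply div_pos
      · have hg := g_pos x hx
        have hE : (12*(1+x) * ((1+x)*Real.log (1+x) - x) + 6*(1+x)^2 * Real.log (1+x)) * ((3+2*x)*x^2)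
            - 6*(1+x)^2 * ((1+x)*Real.log (1+x) - x) * (6*x + 6*x^2)
            = 6*x*(x+1) * (2*x^3 + 6*x^2 + 6*x - 3*(x^2+3*x+2) * Real.log (1+x)) := by ring
        rw [hE]
        apply mul_pos (by positivity)
        linarith
      · positivity
  intro a ha b hb hab
  rw [hf a ha, hf b hb]
  have h := hmono ha hb hab
  simp only [hF] at h
  simp only [div_mul_div_comm]
  exact h
end

section
/- For every x > 0, f(x) < x, where f(x) = (6(1+x)^2/(3+2x)) · ((1+x)ln(1+x) - x)/x^2 - 1. -/
open Real Set

private lemma log_key : ∀ x : ℝ, 0 < x →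
    Real.log (1 + x) < (6*x + 9*x^2 + 2*x^3) / (6*(1+x)^2) := by
  intro x hx
  set g : ℝ → ℝ := fun y => (6*y + 9*y^2 + 2*y^3) / (6*(1+y)^2) - Real.log (1+y) with hg
  have hderiv : ∀ y : ℝ, 0 < y → HasDerivAt g (y^3 / (3*(1+y)^3)) y := by
    intro y hy
    have h1 : (1:ℝ) + y ≠ 0 := by positivity
    have h2 : (6:ℝ)*(1+y)^2 ≠ 0 := by positivity
    have hnum : HasDerivAt (fun y : ℝ => 6*y + 9*y^2 + 2*y^3) (6 + 18*y + 6*y^2) y := by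
      have ha := (hasDerivAt_id y).const_mul 6
      have hb := (hasDerivAt_pow 2 y).const_mul 9
      have hc := (hasDerivAt_pow 3 y).const_mul 2
      refine ((ha.add hb).add hc).congr_deriv ?_
      ring
    have hden : HasDerivAt (fun y : ℝ => 6*(1+y)^2) (12*(1+y)) y := by
      have := (((hasDerivAt_id y).const_add 1).pow 2).const_mul 6
      refine this.congr_deriv ?_
      simp [id_eq]
      ring
    have hlog : HasDerivAt (fun y : ℝ => Real.log (1+y)) (1/(1+y)) y := by
      have hinner : HasDerivAt (fun y : ℝ => 1 + y) 1 y := (hasDerivAt_id y).const_add 1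
      have := (Real.hasDerivAt_log h1).comp y hinner
      simpa [Function.comp_def] using this
    have := (hnum.div hden h2).sub hlog
    refine this.congr_deriv ?_
    field_simp
    ring
  have hmono : StrictMonoOn g (Ici (0:ℝ)) := by
    apply strictMonoOn_of_deriv_pos (convex_Ici 0)
    · apply ContinuousOn.sub
      · apply ContinuousOn.div (by fun_prop) (by fun_prop)
        intro y hy
        simp only [mem_Ici] at hy
        positivity
      · intro y hy
        simp only [mem_Ici] at hy
        have : (1:ℝ) + y ≠ 0 := by positivity
        exact ((Real.continuousAt_log this).comp (by fun_prop)).continuousWithinAt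
    · intro y hy
      rw [interior_Ici, mem_Ioi] at hy
      rw [(hderiv y hy).deriv]
      positivity
  have h0 : g 0 = 0 := by simp [hg]
  have hgx := hmono (mem_Ici.mpr le_rfl) (mem_Ici.mpr hx.le) hx
  rw [h0] at hgx
  simp only [hg] at hgx
  linarith [hgx]

theorem stmt_2 :
    ∀ x : ℝ, 0 < x →
      6 * (1 + x)^2 / (3 + 2*x) * (((1 + x) * Real.log (1 + x) - x) / x^2) - 1 < x := by
  intro x hx
  have key := log_key x hx
  have hD : (0:ℝ) < 6*(1+x)^2 := by positivity
  have hk : Real.log (1+x) * (6*(1+x)^2) < 6*x + 9*x^2 + 2*x^3 := (lt_div_iff₀ hD).mp key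
  rw [sub_lt_iff_lt_add, div_mul_div_comm, div_lt_iff₀ (by positivity)]
  nlinarith [mul_lt_mul_of_pos_left hk (show (0:ℝ) < 1+x by linarith)]
end

section
/- If c > 1 and A_CB > 0 satisfies c^2 - 1 = f(A_CB) with f(x) = (6(1+x)^2/(3+2x)) · ((1+x)ln(1+x) - x)/x^2 - 1, then the Serre amplitude A_S := c^2 - 1 satisfies A_S < A_CB. -/
open Real Set

lemma F_deriv (x : ℝ) (hx : 0 < 1 + x) :
    HasDerivAt (fun y : ℝ => (6*y+9*y^2+2*y^3)/(6*(1+y)^2) - Real.log (1+y))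
      (x^3/(3*(1+x)^3)) x := by
  have hu : HasDerivAt (fun y : ℝ => 6*y+9*y^2+2*y^3) (6+18*x+6*x^2) x := by
    have := ((hasDerivAt_id x).const_mul 6).add
      (((hasDerivAt_pow 2 x).const_mul 9).add ((hasDerivAt_pow 3 x).const_mul 2))
    convert this using 1
    · rfl
    · rfl
    · funext y; simp only [id, Pi.add_apply]; ring
    · norm_num; ring
  have hv : HasDerivAt (fun y : ℝ => 6*(1+y)^2) (12*(1+x)) x := by
    have h1 : HasDerivAt (fun y : ℝ => 1 + y) 1 x := (hasDerivAt_id x).const_add 1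
    have := ((h1.pow 2)).const_mul 6
    convert this using 1
    · rfl
    · rfl
    · funext y; simp only [Pi.pow_apply]
    ring
  have hvne : 6*(1+x)^2 ≠ 0 := by positivity
  have hl : HasDerivAt (fun y : ℝ => Real.log (1+y)) (1/(1+x)) x := by
    have h1 : HasDerivAt (fun y : ℝ => 1 + y) 1 x := (hasDerivAt_id x).const_add 1
    simpa using h1.log (ne_of_gt hx)
  have := (hu.div hv hvne).sub hl
  convert this using 1
  · rfl
  · rfl
  · rfl
  field_simp
  ring

lemma key (x : ℝ) (hx : 0 < x) :
    Real.log (1+x) < (6*x+9*x^2+2*x^3)/(6*(1+x)^2) := by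
  set F : ℝ → ℝ := fun y => (6*y+9*y^2+2*y^3)/(6*(1+y)^2) - Real.log (1+y) with hF
  have hmono : StrictMonoOn F (Ici (0:ℝ)) := by
    apply strictMonoOn_of_deriv_pos (convex_Ici 0)
    · intro y hy
      have hy' : 0 < 1 + y := by simp at hy; linarith
      exact ((F_deriv y hy').continuousAt).continuousWithinAt
    · intro y hy
      rw [interior_Ici] at hy
      have hy' : (0:ℝ) < y := hy
      have hy'' : 0 < 1 + y := by linarith
      rw [(F_deriv y hy'').deriv]
      positivity
  have h0 : F 0 = 0 := by simp [hF]
  have := hmono (self_mem_Ici) (le_of_lt hx : (0:ℝ) ≤ x) hx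
  rw [h0] at this
  simp only [hF] at this
  linarith

theorem stmt_3 (c A_CB : ℝ) (hc : 1 < c) (hA : 0 < A_CB)
    (h : c^2 - 1 =
      6 * (1 + A_CB)^2 / (3 + 2*A_CB) *
        (((1 + A_CB) * Real.log (1 + A_CB) - A_CB) / A_CB^2) - 1) :
    c^2 - 1 < A_CB := by
  have hk := key A_CB hA
  rw [h]
  have h1 : (0:ℝ) < 1 + A_CB := by linarith
  have h2 : (0:ℝ) < 3 + 2*A_CB := by linarith
  have h3 : (0:ℝ) < A_CB^2 := by positivity
  have hk' : Real.log (1+A_CB)*(6*(1+A_CB)^2) < 6*A_CB+9*A_CB^2+2*A_CB^3 :=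
    (lt_div_iff₀ (by positivity)).mp hk
  rw [div_mul_div_comm, sub_lt_iff_lt_add, div_lt_iff₀ (by positivity)]
  nlinarith [mul_lt_mul_of_pos_left hk' h1]
end
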